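/- Let S be a finite set with |S| = n ≥ 1050 and let G = ℤ/2 * ℤ/2 * ℤ/2, the free product of three copies of ℤ/2. Then there exist two G-invariant probability measures μ and ν on the configuration space (Finset S)^G (labels ordered by set inclusion) such that μ and ν admit a monotone coupling, but no monotone coupling of μ and ν is invariant under the diagonal left-translation action of G. -/

import Mathlib

open MeasureTheory
open scoped ENNReal

/-- Left translation of a configuration `ω : G → Λ` by a group element `g`:
`(g • ω) x = ω (g⁻¹ x)`. -/
def configTranslate {G Λ : Type*} [Group G] (g : G) (ω : G → Λ) : G → Λ :=
  fun x => ω (g⁻¹ * x)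

/-- A measure on the configuration space `Λ^G` (with the product σ-algebra) is invariant if it
is preserved by every left translation. -/
def IsInvariantConfigMeasure {G Λ : Type*} [Group G] [MeasurableSpace Λ]
    (μ : Measure (G → Λ)) : Prop :=
  ∀ g : G, μ.map (configTranslate g) = μ

/-- A coupling of `μ` and `ν` is a measure on the product whose marginals are `μ` and `ν`. -/
def IsCoupling {α β : Type*} [MeasurableSpace α] [MeasurableSpace β]
    (π : Measure (α × β)) (μ : Measure α) (ν : Measure β) : Prop :=
  π.map Prod.fst = μ ∧ π.map Prod.snd = ν

/-- A coupling of two configuration measures is monotone if almost surely the first component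
is pointwise below the second (here labels are finite sets, ordered by inclusion). -/
def IsMonotoneCoupling {G Λ : Type*} [Preorder Λ] [MeasurableSpace Λ]
    (π : Measure ((G → Λ) × (G → Λ))) : Prop :=
  π {p | ∀ x : G, p.1 x ≤ p.2 x} = 1

/-- A measure on pairs of configurations is invariant under the diagonal left-translation
action of `G`. -/
def IsInvariantPairMeasure {G Λ : Type*} [Group G] [MeasurableSpace Λ]
    (π : Measure ((G → Λ) × (G → Λ))) : Prop :=
  ∀ g : G, π.map (fun p => (configTranslate g p.1, configTranslate g p.2)) = π

namespace NIMC


abbrev GG : Type := Monoid.CoprodI fun _ : Fin 3 => Multiplicative (ZMod 2)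

def gen : Multiplicative (ZMod 2) := Multiplicative.ofAdd 1

lemma gen_mul_gen : gen * gen = 1 := by decide

def s (i : Fin 3) : GG := Monoid.CoprodI.of (M := fun _ : Fin 3 => Multiplicative (ZMod 2)) (i := i) gen

lemma s_mul_s (i : Fin 3) : s i * s i = 1 := by
  rw [s, ← MonoidHom.map_mul, gen_mul_gen, MonoidHom.map_one]

lemma s_inv (i : Fin 3) : (s i)⁻¹ = s i := inv_eq_of_mul_eq_one_right (s_mul_s i)

lemma mul_s_s (x : GG) (i : Fin 3) : x * s i * s i = x := by
  rw [mul_assoc, s_mul_s, mul_one]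

/-- Reduced words over the alphabet `Fin 3`. -/
def W : Type := {l : List (Fin 3) // l.Chain' (· ≠ ·)}

attribute [reducible] W

instance : Countable W := by unfold W; infer_instance

lemma chain'_cons_of_ne {l : List (Fin 3)} (hl : l.Chain' (· ≠ ·)) {i : Fin 3}
    (h : l.head? ≠ some i) : (i :: l).Chain' (· ≠ ·) := by
  unfold List.Chain'
  rw [List.isChain_cons]
  refine ⟨fun y hy hiy => h ?_, hl⟩
  rw [Option.mem_def] at hy
  rw [hiy]
  exact hy

def sigfun (i : Fin 3) (w : W) : W :=
  if h : w.1.head? = some i then ⟨w.1.tail, w.2.tail⟩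
  else ⟨i :: w.1, chain'_cons_of_ne w.2 h⟩

lemma sigfun_val_pos (i : Fin 3) (w : W) (h : w.1.head? = some i) :
    (sigfun i w).1 = w.1.tail := by simp [sigfun, h]

lemma sigfun_val_neg (i : Fin 3) (w : W) (h : w.1.head? ≠ some i) :
    (sigfun i w).1 = i :: w.1 := by simp [sigfun, h]

lemma sigfun_involutive (i : Fin 3) : Function.Involutive (sigfun i) := by
  intro w
  apply Subtype.ext
  by_cases h : w.1.head? = some i
  · -- w.1 = i :: t with t.head? ≠ some i
    rcases hw : w.1 with _ | ⟨a, t⟩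
    · rw [hw] at h; simp at h
    · have ha : a = i := by rw [hw] at h; simpa using h
      subst ha
      have htail : (sigfun a w).1 = t := by rw [sigfun_val_pos a w h, hw]; rfl
      have h2 : t.head? ≠ some a := by
        intro hc
        have hch := w.2
        rw [hw] at hch
        rcases t with _ | ⟨b, t'⟩
        · simp at hc
        · unfold List.Chain' at hch
          rw [List.isChain_cons_cons] at hch
          have hab : a ≠ b := hch.1
          simp at hc
          exact hab hc.symm
      rw [sigfun_val_neg a _ (by rw [htail]; exact h2), htail, ← hw]
  · rw [sigfun_val_pos i _ (by rw [sigfun_val_neg i w h]; rfl), sigfun_val_neg i w h]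
    rfl

def sigp (i : Fin 3) : Equiv.Perm W := (sigfun_involutive i).toPerm

lemma sigp_apply (i : Fin 3) (w : W) : sigp i w = sigfun i w := rfl

lemma zmod2_cases : ∀ m : Multiplicative (ZMod 2), m = 1 ∨ m = gen := by decide

/-- The homomorphism from the `i`-th copy of `ℤ/2` to permutations of reduced words. -/
def psi (i : Fin 3) : Multiplicative (ZMod 2) →* Equiv.Perm W where
  toFun m := if m = gen then sigp i else 1
  map_one' := by
    have : (1 : Multiplicative (ZMod 2)) ≠ gen := by decide
    simp [this]
  map_mul' m n := by
    have hsq : sigp i * sigp i = 1 := by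
      ext w
      simp [Equiv.Perm.mul_apply, sigp_apply, (sigfun_involutive i) w]
    rcases zmod2_cases m with hm | hm <;> rcases zmod2_cases n with hn | hn <;>
      subst hm <;> subst hn <;>
      simp [hsq, show (1 : Multiplicative (ZMod 2)) ≠ gen by decide, gen_mul_gen]

def Phi : GG →* Equiv.Perm W := Monoid.CoprodI.lift psi

lemma Phi_s (i : Fin 3) : Phi (s i) = sigp i := by
  rw [s, Phi, Monoid.CoprodI.lift_of]
  simp [psi]

lemma chain'_singleton_ne (i : Fin 3) : List.Chain' (· ≠ ·) [i] := List.isChain_singleton i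

def nilW : W := ⟨[], List.isChain_nil⟩

def redw (x : GG) : W := Phi x nilW

def prodW (w : W) : GG := (w.1.map s).prod

lemma prodW_sigfun (i : Fin 3) (w : W) : prodW (sigfun i w) = s i * prodW w := by
  by_cases h : w.1.head? = some i
  · rcases hw : w.1 with _ | ⟨a, t⟩
    · rw [hw] at h; simp at h
    · have ha : a = i := by rw [hw] at h; simpa using h
      subst ha
      have : (sigfun a w).1 = t := by rw [sigfun_val_pos a w h, hw]; rfl
      rw [prodW, this, prodW, hw]
      simp only [List.map_cons, List.prod_cons]
      rw [← mul_assoc, s_mul_s, one_mul]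
  · rw [prodW, sigfun_val_neg i w h]
    simp [prodW]

lemma prodW_Phi (x : GG) : ∀ w : W, prodW (Phi x w) = x * prodW w := by
  induction x using Monoid.CoprodI.induction_on with
  | one => intro w; simp
  | of i m =>
    intro w
    rcases zmod2_cases m with hm | hm
    · subst hm; simp
    · subst hm
      have : Monoid.CoprodI.of (i := i) gen = s i := rfl
      rw [this, Phi_s]
      exact prodW_sigfun i w
  | mul x y hx hy =>
    intro w
    rw [map_mul, Equiv.Perm.mul_apply, hx, hy, mul_assoc]

lemma prodW_redw (x : GG) : prodW (redw x) = x := by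
  have := prodW_Phi x nilW
  simpa [redw, prodW, nilW] using this

lemma redw_injective : Function.Injective redw := by
  intro x y h
  rw [← prodW_redw x, ← prodW_redw y, h]

instance : Countable GG := redw_injective.countable

/-! ### Right multiplication and the parent/child structure -/

lemma foldPhi (l : List (Fin 3)) (w : W) :
    Phi ((l.map s).prod) w = l.foldr (fun a acc => sigfun a acc) w := by
  induction l with
  | nil => simp
  | cons a t ih =>
    simp only [List.map_cons, List.prod_cons, map_mul, Equiv.Perm.mul_apply, List.foldr_cons]
    rw [ih, Phi_s]
    rfl

lemma getLast?_cons_cons (a b : Fin 3) (t : List (Fin 3)) :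
    (a :: b :: t).getLast? = (b :: t).getLast? := rfl

lemma singW (i : Fin 3) : Phi (s i) nilW = ⟨[i], chain'_singleton_ne i⟩ := by
  rw [Phi_s, sigp_apply]
  apply Subtype.ext
  rw [sigfun_val_neg _ _ (by simp [nilW])]
  rfl

/-- Key structural computation: appending a letter to a reduced word. -/
lemma foldr_single (l : List (Fin 3)) (hl : l.Chain' (· ≠ ·)) (i : Fin 3) :
    (l.foldr (fun a acc => sigfun a acc) ⟨[i], chain'_singleton_ne i⟩).1 =
      if l.getLast? = some i then l.dropLast else l ++ [i] := by
  induction l with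
  | nil => simp
  | cons a t ih =>
    have ht : t.Chain' (· ≠ ·) := hl.tail
    have ihv := ih ht
    simp only [List.foldr_cons]
    set r := t.foldr (fun a acc => sigfun a acc) ⟨[i], chain'_singleton_ne i⟩ with hr
    rcases t with _ | ⟨b, t'⟩
    · -- t = []
      have hrv : r.1 = [i] := by simpa using ihv
      by_cases hai : a = i
      · subst hai
        rw [if_pos (by rfl)]
        rw [sigfun_val_pos a r (by rw [hrv]; rfl), hrv]
        rfl
      · rw [if_neg (by simpa using hai)]
        rw [sigfun_val_neg a r (by rw [hrv]; simpa using (Ne.symm hai)), hrv]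
        rfl
    · -- t = b :: t'
      have hab : a ≠ b := (List.isChain_cons_cons.1 hl).1
      by_cases hlast : (b :: t').getLast? = some i
      · have hrv : r.1 = (b :: t').dropLast := by rw [hr, ihv, if_pos hlast]
        rw [if_pos (by rw [getLast?_cons_cons]; exact hlast)]
        have hdrop : (a :: b :: t').dropLast = a :: (b :: t').dropLast := rfl
        rw [hdrop]
        rcases t' with _ | ⟨c, t''⟩
        · -- dropLast [b] = []
          rw [sigfun_val_neg a r (by rw [hrv]; simp), hrv]
        · rw [sigfun_val_neg a r (by rw [hrv]; simpa using (Ne.symm hab)), hrv]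
      · have hrv : r.1 = (b :: t') ++ [i] := by rw [hr, ihv, if_neg hlast]
        rw [if_neg (by rw [getLast?_cons_cons]; exact hlast)]
        rw [sigfun_val_neg a r (by rw [hrv]; simpa using (Ne.symm hab)), hrv]
        rfl

lemma redw_mul_s (x : GG) (i : Fin 3) :
    (redw (x * s i)).1 =
      if (redw x).1.getLast? = some i then (redw x).1.dropLast else (redw x).1 ++ [i] := by
  have h1 : redw (x * s i) = Phi x (Phi (s i) nilW) := by
    rw [redw, map_mul, Equiv.Perm.mul_apply]
  rw [h1, singW]
  have h2 : Phi x = Phi (((redw x).1.map s).prod) := by rw [← prodW, prodW_redw]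
  rw [h2, foldPhi]
  exact foldr_single (redw x).1 (redw x).2 i

def par (x : GG) : Option (Fin 3) := (redw x).1.getLast?

lemma redw_one : redw 1 = nilW := by rw [redw, map_one]; rfl

lemma par_one : par 1 = none := by rw [par, redw_one]; rfl

lemma eq_one_of_par_none {x : GG} (h : par x = none) : x = 1 := by
  apply redw_injective
  rw [redw_one]
  apply Subtype.ext
  rw [par] at h
  simpa [nilW] using (List.getLast?_eq_none_iff.1 h)

lemma getLast?_dropLast_ne {l : List (Fin 3)} (hl : l.Chain' (· ≠ ·)) {i : Fin 3}
    (h : l.getLast? = some i) : l.dropLast.getLast? ≠ some i := by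
  induction l using List.reverseRecOn with
  | nil => simp at h
  | append_singleton l₂ b _ =>
    have hb : b = i := by simpa using h
    subst hb
    rw [List.dropLast_concat]
    induction l₂ using List.reverseRecOn with
    | nil => simp
    | append_singleton l₃ c _ =>
      have hcb : c ≠ b := by
        rcases List.isChain_append.1 hl with ⟨_, _, hx⟩
        exact hx c (by simp) b (by simp)
      simpa using hcb

/-- THE key fact: right multiplication by a generator toggles whether the last letter is `i`. -/
lemma par_mul_s (x : GG) (i : Fin 3) : par (x * s i) = some i ↔ ¬ (par x = some i) := by
  constructor
  · intro h hpar
    rw [par] at hpar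
    rw [par, redw_mul_s, if_pos hpar] at h
    exact getLast?_dropLast_ne (redw x).2 hpar h
  · intro hpar
    rw [par] at hpar
    rw [par, redw_mul_s, if_neg hpar]
    exact List.getLast?_concat

/-- The child endpoint of the edge `{x, x * s i}` (the endpoint farther from `1`). -/
def ch (x : GG) (i : Fin 3) : GG := if par x = some i then x else x * s i

lemma par_ch (x : GG) (i : Fin 3) : par (ch x i) = some i := by
  rw [ch]
  by_cases h : par x = some i
  · rw [if_pos h]; exact h
  · rw [if_neg h]; exact (par_mul_s x i).2 h

lemma ch_ne_one (x : GG) (i : Fin 3) : ch x i ≠ 1 := by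
  intro h
  have := par_ch x i
  rw [h, par_one] at this
  cases this

lemma ch_mul_s (x : GG) (i : Fin 3) : ch (x * s i) i = ch x i := by
  by_cases h : par x = some i
  · have h2 : ¬ (par (x * s i) = some i) := fun hc => ((par_mul_s x i).1 hc) h
    rw [ch, if_neg h2, mul_s_s, ch, if_pos h]
  · have h2 : par (x * s i) = some i := (par_mul_s x i).2 h
    rw [ch, if_pos h2, ch, if_neg h]

lemma ch_cases (x : GG) (i : Fin 3) : ch x i = x ∨ ch x i = x * s i := by
  rw [ch]; by_cases h : par x = some i
  · left; rw [if_pos h]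
  · right; rw [if_neg h]

/-- Edge-injectivity of the child map. -/
lemma ch_inj {x y : GG} {i j : Fin 3} (h : ch x i = ch y j) :
    i = j ∧ (y = x ∨ y = x * s i) := by
  have hij : i = j := by
    have h1 := par_ch x i
    have h2 := par_ch y j
    rw [h] at h1
    rw [h1] at h2
    exact Option.some.inj h2
  subst hij
  refine ⟨rfl, ?_⟩
  rcases ch_cases x i with hx | hx <;> rcases ch_cases y i with hy | hy <;>
    rw [hx] at h <;> rw [hy] at h
  · left; exact h.symm
  · right
    have := congrArg (fun z => z * s i) h
    simp only [mul_s_s] at this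
    rw [← this]
  · right
    exact h.symm
  · left
    have := congrArg (fun z => z * s i) h
    simp only [mul_s_s] at this
    exact this.symm

/-! ### Explicit computations -/

lemma redw_s (i : Fin 3) : redw (s i) = ⟨[i], chain'_singleton_ne i⟩ := by
  rw [redw]; exact singW i

lemma par_s (i : Fin 3) : par (s i) = some i := by rw [par, redw_s]; rfl

lemma s_ne_one (i : Fin 3) : s i ≠ 1 := by
  intro h
  have := congrArg par h
  rw [par_s, par_one] at this
  cases this

lemma redw_s_mul_s {i j : Fin 3} (hij : i ≠ j) :
    redw (s i * s j) = ⟨[i, j], (show List.Chain' (· ≠ ·) [i, j] from List.isChain_pair.2 hij)⟩ := by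
  have h1 : redw (s i * s j) = Phi (s i) (redw (s j)) := by
    rw [redw, map_mul, Equiv.Perm.mul_apply]; rfl
  rw [h1, redw_s, Phi_s, sigp_apply]
  apply Subtype.ext
  rw [sigfun_val_neg _ _ (by simpa using (Ne.symm hij))]

lemma s_injective {i j : Fin 3} (h : s i = s j) : i = j := by
  have := congrArg par h
  rw [par_s, par_s] at this
  exact Option.some.inj this

lemma s_ne_s_mul_s {i j k : Fin 3} (hjk : j ≠ k) : s i ≠ s j * s k := by
  intro h
  have := congrArg redw h
  rw [redw_s, redw_s_mul_s hjk] at this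
  have := congrArg (fun w : W => w.1) this
  simp at this

lemma s_mul_s_inj {i j k l : Fin 3} (hij : i ≠ j) (hkl : k ≠ l)
    (h : s i * s j = s k * s l) : i = k ∧ j = l := by
  have := congrArg redw h
  rw [redw_s_mul_s hij, redw_s_mul_s hkl] at this
  have h2 := congrArg (fun w : W => w.1) this
  simp at h2
  exact h2

lemma ch_one (i : Fin 3) : ch 1 i = s i := by
  rw [ch, if_neg (by rw [par_one]; exact fun h => by cases h), one_mul]

lemma ch_s_self (i : Fin 3) : ch (s i) i = s i := by rw [ch, if_pos (par_s i)]

lemma ch_s_other {i j : Fin 3} (hij : j ≠ i) : ch (s i) j = s i * s j := by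
  rw [ch, if_neg]
  rw [par_s]
  intro h
  exact hij (Option.some.inj h).symm

/-! ### The two chosen children of each vertex -/

def cp : Option (Fin 3) → Fin 3 × Fin 3
  | none => (0, 1)
  | some i => (if i = 0 then 1 else 0, if i = 2 then 1 else 2)

lemma cp_ne (o : Option (Fin 3)) : (cp o).1 ≠ (cp o).2 ∧ o ≠ some (cp o).1 ∧ o ≠ some (cp o).2 := by
  rcases o with _ | i
  · simp [cp]
  · fin_cases i <;> simp [cp]

def ach (x : GG) : GG := x * s (cp (par x)).1
def bch (x : GG) : GG := x * s (cp (par x)).2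

lemma ach_eq_ch (x : GG) : ach x = ch x (cp (par x)).1 := by
  rw [ch, if_neg (cp_ne (par x)).2.1, ach]

lemma bch_eq_ch (x : GG) : bch x = ch x (cp (par x)).2 := by
  rw [ch, if_neg (cp_ne (par x)).2.2, bch]

lemma par_ach (x : GG) : par (ach x) = some (cp (par x)).1 := by
  rw [ach_eq_ch]; exact par_ch _ _

lemma par_bch (x : GG) : par (bch x) = some (cp (par x)).2 := by
  rw [bch_eq_ch]; exact par_ch _ _

lemma ach_recover (x : GG) : ach x * s (cp (par x)).1 = x := mul_s_s x _

lemma bch_recover (x : GG) : bch x * s (cp (par x)).2 = x := mul_s_s x _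

/-- The joint child-assignment map, used to compare the laws of `μ` and the first marginal. -/
def theta (q : GG × Bool) : GG := cond q.2 (bch q.1) (ach q.1)

lemma theta_injective : Function.Injective theta := by
  rintro ⟨x, bx⟩ ⟨y, by'⟩ h
  -- all four cases
  have key : ∀ (u v : GG) (ii jj : Fin 3), u * s ii = v * s jj →
      par (u * s ii) = some ii → par (v * s jj) = some jj → u = v ∧ ii = jj := by
    intro u v ii jj he hpu hpv
    have : some ii = some jj := by rw [← hpu, he, hpv]
    have hij : ii = jj := Option.some.inj this
    subst hij
    constructor
    · have := congrArg (fun z => z * s ii) he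
      simpa [mul_s_s] using this
    · rfl
  rcases bx <;> rcases by' <;> simp only [theta, Bool.cond_false, Bool.cond_true] at h
  · -- both ach
    have := key x y _ _ (by rw [← ach, ← ach, h]) (by rw [← ach, par_ach]) (by rw [← ach, par_ach])
    rw [this.1]
  · -- bch x = ach y  (bx = false? careful with rcases order)
    exfalso
    have := key x y _ _ (by rw [← ach, ← bch, h]) (by rw [← ach, par_ach]) (by rw [← bch, par_bch])
    rcases this with ⟨hxy, hii⟩
    subst hxy
    exact (cp_ne (par x)).1 hii
  · exfalso
    have := key x y _ _ (by rw [← bch, ← ach, h]) (by rw [← bch, par_bch]) (by rw [← ach, par_ach])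
    rcases this with ⟨hxy, hii⟩
    subst hxy
    exact (cp_ne (par x)).1 hii.symm
  · have := key x y _ _ (by rw [← bch, ← bch, h]) (by rw [← bch, par_bch]) (by rw [← bch, par_bch])
    rw [this.1]

/-- The index relabeling implementing translation by `g` on edge marks. -/
def iotahat (g : GG) (z : GG) : GG :=
  match par z with
  | none => z
  | some i => ch (g⁻¹ * z) i

lemma iotahat_of_par_none {g z : GG} (h : par z = none) : iotahat g z = z := by
  simp only [iotahat]
  rw [h]

lemma iotahat_of_par_some {g z : GG} {i : Fin 3} (h : par z = some i) :
    iotahat g z = ch (g⁻¹ * z) i := by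
  simp only [iotahat]
  rw [h]

lemma iotahat_ch (g x : GG) (i : Fin 3) : iotahat g (ch x i) = ch (g⁻¹ * x) i := by
  rw [iotahat_of_par_some (par_ch x i)]
  rcases ch_cases x i with hc | hc
  · rw [hc]
  · rw [hc, ← mul_assoc, ch_mul_s]

lemma iotahat_injective (g : GG) : Function.Injective (iotahat g) := by
  intro z z' h
  rcases hz : par z with _ | i <;> rcases hz' : par z' with _ | i'
  · rw [iotahat_of_par_none hz, iotahat_of_par_none hz'] at h
    exact h
  · exfalso
    rw [iotahat_of_par_none hz, iotahat_of_par_some hz'] at h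
    rw [eq_one_of_par_none hz] at h
    exact ch_ne_one _ _ h.symm
  · exfalso
    rw [iotahat_of_par_some hz, iotahat_of_par_none hz'] at h
    rw [eq_one_of_par_none hz'] at h
    exact ch_ne_one _ _ h
  · rw [iotahat_of_par_some hz, iotahat_of_par_some hz'] at h
    rcases ch_inj h with ⟨hii, hcase⟩
    subst hii
    rcases hcase with hc | hc
    · exact mul_left_cancel hc.symm
    · exfalso
      have hzz : z' = z * s i := by
        have := congrArg (fun w => g * w) hc
        simpa [← mul_assoc] using this
      rw [hzz] at hz'
      exact (par_mul_s z i).1 hz' hz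



/-! ### The mark alphabet: `ZMod 1050` with discrete structure -/

def AA : Type := ZMod 1050

instance : AddCommGroup AA := inferInstanceAs (AddCommGroup (ZMod 1050))
instance : Fintype AA := inferInstanceAs (Fintype (ZMod 1050))
instance : DecidableEq AA := inferInstanceAs (DecidableEq (ZMod 1050))
instance : TopologicalSpace AA := ⊥
instance : DiscreteTopology AA := ⟨rfl⟩
instance : MeasurableSpace AA := ⊤
instance : BorelSpace AA := ⟨borel_eq_top_of_discrete.symm⟩

lemma card_AA : Fintype.card AA = 1050 := ZMod.card 1050

instance : IsTopologicalAddGroup AA := by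
  constructor <;> exact continuous_of_discreteTopology

example : T2Space AA := inferInstance
example : SecondCountableTopology AA := inferInstance
example : CompactSpace AA := inferInstance
example : Nonempty AA := inferInstance
example : MeasurableSingletonClass AA := inferInstance

/-! ### Haar (i.i.d. uniform) measures on products -/

section PiHaar

variable (ι : Type*) [Countable ι]

example : CompactSpace (ι → AA) := inferInstance
example : IsTopologicalAddGroup (ι → AA) := inferInstance
example : BorelSpace (ι → AA) := inferInstance
example : SecondCountableTopology (ι → AA) := inferInstance
example : Nonempty (ι → AA) := inferInstance

/-- The i.i.d. uniform measure on `ι → AA`, as a normalized Haar measure. -/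
noncomputable def PiU : Measure (ι → AA) :=
  Measure.addHaarMeasure (⊤ : TopologicalSpace.PositiveCompacts (ι → AA))

instance : IsProbabilityMeasure (PiU ι) := by
  constructor
  rw [PiU, ← TopologicalSpace.PositiveCompacts.coe_top (α := ι → AA)]
  exact Measure.addHaarMeasure_self

instance : (PiU ι).IsAddLeftInvariant :=
  Measure.isAddLeftInvariant_addHaarMeasure _

end PiHaar

/-- Any left-invariant Borel probability measure on a second countable compact
additive group is THE normalized Haar measure. -/
lemma eq_haar_of_invariant {Y : Type*} [AddGroup Y] [TopologicalSpace Y]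
    [IsTopologicalAddGroup Y] [CompactSpace Y] [Nonempty Y] [SecondCountableTopology Y]
    [MeasurableSpace Y] [BorelSpace Y]
    (m : Measure Y) [IsProbabilityMeasure m] [m.IsAddLeftInvariant] :
    m = Measure.addHaarMeasure (⊤ : TopologicalSpace.PositiveCompacts Y) := by
  have h := Measure.addHaarMeasure_unique m (⊤ : TopologicalSpace.PositiveCompacts Y)
  rwa [TopologicalSpace.PositiveCompacts.coe_top, measure_univ, one_smul] at h

/-- Pushing forward an invariant probability measure under a surjective continuous
additive homomorphism gives an invariant probability measure. -/
lemma map_hom_invariant {X Y : Type*} [AddGroup X] [TopologicalSpace X]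
    [IsTopologicalAddGroup X] [MeasurableSpace X] [BorelSpace X]
    [AddGroup Y] [TopologicalSpace Y] [IsTopologicalAddGroup Y]
    [MeasurableSpace Y] [BorelSpace Y]
    (P : Measure X) [P.IsAddLeftInvariant]
    (f : X →+ Y) (hc : Continuous f) (hs : Function.Surjective f) :
    (P.map f).IsAddLeftInvariant := by
  constructor
  intro y
  obtain ⟨x, hx⟩ := hs y
  rw [Measure.map_map (continuous_add_left y).measurable hc.measurable]
  have : (fun z => y + z) ∘ f = f ∘ (fun z => x + z) := by
    funext z
    simp [← hx, map_add]
  rw [this, ← Measure.map_map hc.measurable (continuous_add_left x).measurable]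
  rw [MeasureTheory.map_add_left_eq_self P x]

/-- Pushforward of the uniform measure under a surjective continuous hom between
compact groups is the uniform measure. -/
lemma map_hom_eq_haar {X Y : Type*} [AddGroup X] [TopologicalSpace X]
    [IsTopologicalAddGroup X] [MeasurableSpace X] [BorelSpace X]
    [AddGroup Y] [TopologicalSpace Y] [IsTopologicalAddGroup Y] [CompactSpace Y] [Nonempty Y]
    [SecondCountableTopology Y] [MeasurableSpace Y] [BorelSpace Y]
    (P : Measure X) [IsProbabilityMeasure P] [P.IsAddLeftInvariant]
    (f : X →+ Y) (hc : Continuous f) (hs : Function.Surjective f) :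
    P.map f = Measure.addHaarMeasure (⊤ : TopologicalSpace.PositiveCompacts Y) := by
  have h1 : IsProbabilityMeasure (P.map f) := Measure.isProbabilityMeasure_map hc.measurable.aemeasurable
  have h2 := map_hom_invariant P f hc hs
  exact eq_haar_of_invariant _

/-- Precomposition with an injection preserves the i.i.d. uniform measure. -/
lemma map_precomp {ι ι' : Type*} [Countable ι] [Countable ι'] (f : ι → ι')
    (hf : Function.Injective f) :
    (PiU ι').map (fun u => u ∘ f) = PiU ι := by
  classical
  let F : (ι' → AA) →+ (ι → AA) :=
    { toFun := fun u => u ∘ f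
      map_zero' := rfl
      map_add' := fun _ _ => rfl }
  have hc : Continuous F := continuous_pi fun i => continuous_apply (f i)
  have hs : Function.Surjective F := by
    intro v
    refine ⟨fun j => if h : ∃ i, f i = j then v h.choose else 0, ?_⟩
    funext i
    have h : ∃ i', f i' = f i := ⟨i, rfl⟩
    simp only [F, AddMonoidHom.coe_mk, ZeroHom.coe_mk, Function.comp_apply, dif_pos h]
    congr 1
    exact hf h.choose_spec
  exact map_hom_eq_haar (PiU ι') F hc hs

/-- The uniform measure on `AA` gives each singleton mass `1/1050`. -/
lemma haar_AA_singleton (a : AA) :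
    Measure.addHaarMeasure (⊤ : TopologicalSpace.PositiveCompacts AA) {a} = (1050 : ℝ≥0∞)⁻¹ := by
  set m := Measure.addHaarMeasure (⊤ : TopologicalSpace.PositiveCompacts AA) with hm
  have hprob : IsProbabilityMeasure m := by
    constructor
    rw [hm, ← TopologicalSpace.PositiveCompacts.coe_top (α := AA)]
    exact Measure.addHaarMeasure_self
  have hsingle : ∀ b : AA, m {b} = m {0} := by
    intro b
    have := MeasureTheory.map_add_left_eq_self m b
    calc m {b} = (m.map (fun x => b + x)) {b} := by rw [this]
    _ = m ((fun x => b + x) ⁻¹' {b}) := Measure.map_apply (by fun_prop) (MeasurableSet.of_discrete)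
    _ = m {0} := by
        congr 1
        ext x
        simp
  have hd : ((Finset.univ : Finset AA) : Set AA).PairwiseDisjoint (fun b => ({b} : Set AA)) :=
    fun b _ c _ h => by simpa [Set.disjoint_singleton] using h
  have huniv : (Finset.univ : Finset AA).sum (fun b => m {b}) = 1 := by
    rw [← measure_univ (μ := m)]
    have hu : (Set.univ : Set AA) = ⋃ b ∈ (Finset.univ : Finset AA), {b} := by
      ext x; simp
    rw [hu, measure_biUnion_finset hd (fun b _ => measurableSet_singleton b)]
  rw [Finset.sum_congr rfl (fun b _ => hsingle b)] at huniv
  rw [Finset.sum_const, Finset.card_univ, card_AA] at huniv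
  have h0 : m {0} = (1050 : ℝ≥0∞)⁻¹ := by
    rw [nsmul_eq_mul] at huniv
    have hcast : ((1050 : ℕ) : ℝ≥0∞) = (1050 : ℝ≥0∞) := by norm_num
    rw [hcast] at huniv
    calc m {0} = ((1050 : ℝ≥0∞)⁻¹ * 1050) * m {0} := by
          rw [ENNReal.inv_mul_cancel (by norm_num) (by norm_num), one_mul]
    _ = (1050 : ℝ≥0∞)⁻¹ * (1050 * m {0}) := by rw [mul_assoc]
    _ = (1050 : ℝ≥0∞)⁻¹ := by rw [huniv, mul_one]
  rw [hsingle a, h0]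

/-- Collision probability: two fixed distinct coordinates agree with probability `1/1050`. -/
lemma collision_bound {ι : Type*} [Countable ι] {z z' : ι} (hzz : z ≠ z') :
    PiU ι {u | u z = u z'} = (1050 : ℝ≥0∞)⁻¹ := by
  classical
  let F : (ι → AA) →+ AA :=
    { toFun := fun u => u z - u z'
      map_zero' := by simp
      map_add' := fun u v => by
        simp only [Pi.add_apply]
        abel }
  have hc : Continuous F := (Continuous.sub (G := AA) (continuous_apply z) (continuous_apply z'))
  have hs : Function.Surjective F := by
    intro a
    refine ⟨fun j => if j = z then a else 0, ?_⟩
    simp only [F, AddMonoidHom.coe_mk, ZeroHom.coe_mk, if_pos rfl, if_neg (Ne.symm hzz)]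
    simp
  have hmap := map_hom_eq_haar (PiU ι) F hc hs
  have hset : {u : ι → AA | u z = u z'} = F ⁻¹' {0} := by
    ext u
    simp only [Set.mem_setOf_eq, Set.mem_preimage, Set.mem_singleton_iff]
    constructor
    · intro h; simp [F, h]
    · intro h
      have : u z - u z' = 0 := h
      exact sub_eq_zero.1 this
  rw [hset, ← Measure.map_apply hc.measurable (MeasurableSet.of_discrete), hmap]
  exact haar_AA_singleton 0


/-! ### The configuration-space construction -/

section Config

variable {S : Type*} [Fintype S] [DecidableEq S] [MeasurableSpace (Finset S)]
  [MeasurableSingletonClass (Finset S)]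

/-- The `ν`-configuration: each site is labelled by the marks of its three incident edges
(each edge being indexed by its child endpoint). -/
def Feta (e : AA ↪ S) (u : GG → AA) : GG → Finset S :=
  fun x => {e (u (ch x 0)), e (u (ch x 1)), e (u (ch x 2))}

/-- The `μ`-configuration used in the coupling: each site is labelled by the marks of its
two chosen child edges. -/
def Fom (e : AA ↪ S) (u : GG → AA) : GG → Finset S :=
  fun x => {e (u (ach x)), e (u (bch x))}

/-- The reference `μ`-configuration map, indexed by `GG × Bool`. -/
def Fom2 (e : AA ↪ S) (v : GG × Bool → AA) : GG → Finset S :=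
  fun x => {e (v (x, false)), e (v (x, true))}

lemma measurable_pair3 {ι : Type*} (z1 z2 z3 : ι) :
    Measurable (fun u : ι → AA => (u z1, u z2, u z3)) :=
  (measurable_pi_apply _).prodMk ((measurable_pi_apply _).prodMk (measurable_pi_apply _))

lemma measurable_pair2 {ι : Type*} (z1 z2 : ι) :
    Measurable (fun u : ι → AA => (u z1, u z2)) :=
  (measurable_pi_apply _).prodMk (measurable_pi_apply _)

lemma measurable_Feta (e : AA ↪ S) : Measurable (Feta e) := by
  apply measurable_pi_lambda
  intro x
  exact (Measurable.of_discrete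
    (f := fun t : AA × AA × AA => ({e t.1, e t.2.1, e t.2.2} : Finset S))).comp
    (measurable_pair3 _ _ _)

lemma measurable_Fom (e : AA ↪ S) : Measurable (Fom e) := by
  apply measurable_pi_lambda
  intro x
  exact (Measurable.of_discrete
    (f := fun t : AA × AA => ({e t.1, e t.2} : Finset S))).comp
    (measurable_pair2 (ach x) (bch x))

lemma measurable_Fom2 (e : AA ↪ S) : Measurable (Fom2 e) := by
  apply measurable_pi_lambda
  intro x
  exact (Measurable.of_discrete
    (f := fun t : AA × AA => ({e t.1, e t.2} : Finset S))).comp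
    (measurable_pair2 (x, false) (x, true))

lemma measurable_configTranslate (g : GG) :
    Measurable (configTranslate (Λ := Finset S) g) :=
  measurable_pi_lambda _ fun x => measurable_pi_apply _

lemma measurable_precomp {ι ι' : Type*} (f : ι → ι') :
    Measurable (fun u : ι' → AA => u ∘ f) :=
  measurable_pi_lambda _ fun i => measurable_pi_apply (f i)

/-- The measure `μ`. -/
noncomputable def muM (e : AA ↪ S) : Measure (GG → Finset S) :=
  (PiU (GG × Bool)).map (Fom2 e)

/-- The measure `ν`. -/
noncomputable def nuM (e : AA ↪ S) : Measure (GG → Finset S) :=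
  (PiU GG).map (Feta e)

/-- The coupling `π`. -/
noncomputable def piM (e : AA ↪ S) : Measure ((GG → Finset S) × (GG → Finset S)) :=
  (PiU GG).map (fun u => (Fom e u, Feta e u))

instance (e : AA ↪ S) : IsProbabilityMeasure (muM e) :=
  Measure.isProbabilityMeasure_map (measurable_Fom2 e).aemeasurable

instance (e : AA ↪ S) : IsProbabilityMeasure (nuM e) :=
  Measure.isProbabilityMeasure_map (measurable_Feta e).aemeasurable

instance (e : AA ↪ S) : IsProbabilityMeasure (piM e) :=
  Measure.isProbabilityMeasure_map ((measurable_Fom e).prodMk (measurable_Feta e)).aemeasurable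

lemma translate_Fom2 (e : AA ↪ S) (g : GG) (v : GG × Bool → AA) :
    configTranslate g (Fom2 e v) = Fom2 e (v ∘ fun q : GG × Bool => (g⁻¹ * q.1, q.2)) := rfl

lemma translate_Feta (e : AA ↪ S) (g : GG) (u : GG → AA) :
    configTranslate g (Feta e u) = Feta e (u ∘ iotahat g) := by
  funext x
  simp only [configTranslate, Feta, Function.comp_apply]
  rw [iotahat_ch, iotahat_ch, iotahat_ch]

lemma Fom_eq_Fom2 (e : AA ↪ S) (u : GG → AA) : Fom e u = Fom2 e (u ∘ theta) := rfl

lemma muM_invariant (e : AA ↪ S) : IsInvariantConfigMeasure (muM e) := by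
  intro g
  rw [muM, Measure.map_map (measurable_configTranslate g) (measurable_Fom2 e)]
  have h1 : configTranslate g ∘ Fom2 e
      = Fom2 e ∘ (fun v => v ∘ fun q : GG × Bool => (g⁻¹ * q.1, q.2)) := rfl
  rw [h1, ← Measure.map_map (measurable_Fom2 e)
    (measurable_precomp (fun q : GG × Bool => (g⁻¹ * q.1, q.2)))]
  have hinj : Function.Injective (fun q : GG × Bool => (g⁻¹ * q.1, q.2)) := by
    intro q q' h
    simp only [Prod.mk.injEq] at h
    exact Prod.ext (mul_left_cancel h.1) h.2
  rw [map_precomp _ hinj]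

lemma nuM_invariant (e : AA ↪ S) : IsInvariantConfigMeasure (nuM e) := by
  intro g
  rw [nuM, Measure.map_map (measurable_configTranslate g) (measurable_Feta e)]
  have h1 : configTranslate g ∘ Feta e = Feta e ∘ (fun u => u ∘ iotahat g) := by
    funext u
    exact translate_Feta e g u
  rw [h1, ← Measure.map_map (measurable_Feta e) (measurable_precomp (iotahat g))]
  rw [map_precomp _ (iotahat_injective g)]

lemma piM_coupling (e : AA ↪ S) : IsCoupling (piM e) (muM e) (nuM e) := by
  constructor
  · rw [piM, Measure.map_map measurable_fst ((measurable_Fom e).prodMk (measurable_Feta e))]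
    have h1 : (Prod.fst ∘ fun u => (Fom e u, Feta e u)) = Fom2 e ∘ (fun u => u ∘ theta) := by
      funext u
      exact Fom_eq_Fom2 e u
    rw [h1, ← Measure.map_map (measurable_Fom2 e) (measurable_precomp theta),
      map_precomp _ theta_injective, muM]
  · rw [piM, Measure.map_map measurable_snd ((measurable_Fom e).prodMk (measurable_Feta e))]
    rfl

lemma mem_three {α : Type*} [DecidableEq α] (f : Fin 3 → α) (j : Fin 3) :
    f j ∈ ({f 0, f 1, f 2} : Finset α) := by
  fin_cases j <;> simp

lemma Fom_subset_Feta (e : AA ↪ S) (u : GG → AA) (x : GG) : Fom e u x ⊆ Feta e u x := by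
  intro a ha
  rw [Fom, Finset.mem_insert, Finset.mem_singleton] at ha
  rcases ha with ha | ha
  · rw [ha, ach_eq_ch]
    exact mem_three (fun j => e (u (ch x j))) _
  · rw [ha, bch_eq_ch]
    exact mem_three (fun j => e (u (ch x j))) _

lemma monoSet_measurable : MeasurableSet {p : (GG → Finset S) × (GG → Finset S) | ∀ x : GG, p.1 x ≤ p.2 x} := by
  have : {p : (GG → Finset S) × (GG → Finset S) | ∀ x : GG, p.1 x ≤ p.2 x}
      = ⋂ x : GG, (fun p : (GG → Finset S) × (GG → Finset S) => (p.1 x, p.2 x)) ⁻¹'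
          {q : Finset S × Finset S | q.1 ≤ q.2} := by
    ext p
    simp [Set.mem_iInter]
  rw [this]
  exact MeasurableSet.iInter fun x =>
    (((measurable_pi_apply x).comp measurable_fst).prodMk
      ((measurable_pi_apply x).comp measurable_snd)) MeasurableSet.of_discrete

lemma piM_monotone (e : AA ↪ S) : IsMonotoneCoupling (piM e) := by
  rw [IsMonotoneCoupling, piM,
    Measure.map_apply ((measurable_Fom e).prodMk (measurable_Feta e)) monoSet_measurable]
  have : (fun u => (Fom e u, Feta e u)) ⁻¹'
      {p : (GG → Finset S) × (GG → Finset S) | ∀ x : GG, p.1 x ≤ p.2 x} = Set.univ := by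
    ext u
    simp only [Set.mem_preimage, Set.mem_setOf_eq, Set.mem_univ, iff_true]
    intro x
    exact Finset.le_iff_subset.2 (Fom_subset_Feta e u x)
  rw [this]
  exact measure_univ

end Config

/-! ### Probability estimates -/

/-- Union bound for collisions along a list of pairs of indices. -/
lemma PiU_bad_le {ι : Type*} [Countable ι] (L : List (ι × ι)) :
    PiU ι {u | ∃ p ∈ L, p.1 ≠ p.2 ∧ u p.1 = u p.2} ≤ L.length * (1050 : ℝ≥0∞)⁻¹ := by
  induction L with
  | nil => simp
  | cons q t ih =>
    have hsub : {u : ι → AA | ∃ p ∈ q :: t, p.1 ≠ p.2 ∧ u p.1 = u p.2}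
        ⊆ {u | q.1 ≠ q.2 ∧ u q.1 = u q.2} ∪ {u | ∃ p ∈ t, p.1 ≠ p.2 ∧ u p.1 = u p.2} := by
      rintro u ⟨p, hp, hne, hu⟩
      rcases List.mem_cons.1 hp with hp | hp
      · left; exact ⟨hp ▸ hne, hp ▸ hu⟩
      · right; exact ⟨p, hp, hne, hu⟩
    have h1 : PiU ι {u | q.1 ≠ q.2 ∧ u q.1 = u q.2} ≤ (1050 : ℝ≥0∞)⁻¹ := by
      by_cases hq : q.1 = q.2
      · have : {u : ι → AA | q.1 ≠ q.2 ∧ u q.1 = u q.2} = ∅ := by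
          ext u; simp [hq]
        rw [this]; simp
      · refine le_trans (measure_mono ?_) (le_of_eq (collision_bound hq))
        intro u hu; exact hu.2
    calc PiU ι {u | ∃ p ∈ q :: t, p.1 ≠ p.2 ∧ u p.1 = u p.2}
        ≤ PiU ι ({u | q.1 ≠ q.2 ∧ u q.1 = u q.2} ∪ {u | ∃ p ∈ t, p.1 ≠ p.2 ∧ u p.1 = u p.2}) :=
          measure_mono hsub
      _ ≤ PiU ι {u | q.1 ≠ q.2 ∧ u q.1 = u q.2} + PiU ι {u | ∃ p ∈ t, p.1 ≠ p.2 ∧ u p.1 = u p.2} :=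
          measure_union_le _ _
      _ ≤ (1050 : ℝ≥0∞)⁻¹ + t.length * (1050 : ℝ≥0∞)⁻¹ := add_le_add h1 ih
      _ = (q :: t).length * (1050 : ℝ≥0∞)⁻¹ := by
          rw [List.length_cons]
          push_cast
          ring

/-- The nine relevant vertices near the identity. -/
def ZL : List GG :=
  [s 0, s 1, s 2, s 0 * s 1, s 0 * s 2, s 1 * s 0, s 1 * s 2, s 2 * s 0, s 2 * s 1]

lemma s_mem_ZL (j : Fin 3) : s j ∈ ZL := by
  fin_cases j <;> simp [ZL]

lemma ch_s_mem_ZL (i k : Fin 3) : ch (s i) k ∈ ZL := by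
  by_cases hk : k = i
  · rw [hk, ch_s_self]; exact s_mem_ZL i
  · rw [ch_s_other hk]
    fin_cases i <;> fin_cases k <;> simp_all [ZL]

lemma ch_s_trivial {i k j : Fin 3} (h : s j = ch (s i) k) : j = i := by
  by_cases hk : k = i
  · rw [hk, ch_s_self] at h
    exact s_injective h
  · rw [ch_s_other hk] at h
    exact absurd h (s_ne_s_mul_s (Ne.symm hk))

section Events

variable {S : Type*} [Fintype S] [DecidableEq S] [MeasurableSpace (Finset S)]
  [MeasurableSingletonClass (Finset S)]

lemma Feta_one (e : AA ↪ S) (u : GG → AA) :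
    Feta e u 1 = {e (u (s 0)), e (u (s 1)), e (u (s 2))} := by
  rw [Feta, ch_one, ch_one, ch_one]

lemma mem_Feta_one {e : AA ↪ S} {u : GG → AA} {v : S} (h : v ∈ Feta e u 1) :
    ∃ j : Fin 3, v = e (u (s j)) := by
  rw [Feta_one] at h
  rcases Finset.mem_insert.1 h with h | h
  · exact ⟨0, h⟩
  rcases Finset.mem_insert.1 h with h | h
  · exact ⟨1, h⟩
  · exact ⟨2, Finset.mem_singleton.1 h⟩

lemma mem_Feta {e : AA ↪ S} {u : GG → AA} {v : S} {x : GG} (h : v ∈ Feta e u x) :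
    ∃ k : Fin 3, v = e (u (ch x k)) := by
  rw [Feta] at h
  rcases Finset.mem_insert.1 h with h | h
  · exact ⟨0, h⟩
  rcases Finset.mem_insert.1 h with h | h
  · exact ⟨1, h⟩
  · exact ⟨2, Finset.mem_singleton.1 h⟩

/-- Bad event for `μ`: the root label is not a two-element set. -/
def A1 (S : Type*) [Fintype S] [DecidableEq S] : Set (GG → Finset S) :=
  (fun ω => ω 1) ⁻¹' {A : Finset S | A.card ≠ 2}

/-- Bad event for `ν`: some pair of adjacent labels near the root share two elements. -/
def A2 (S : Type*) [Fintype S] [DecidableEq S] : Set (GG → Finset S) :=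
  ⋃ i : Fin 3, (fun η => (η 1, η (s i))) ⁻¹' {q : Finset S × Finset S | 2 ≤ (q.1 ∩ q.2).card}

/-- Bad event for `μ`: the root label shares an element with the label at `s i`. -/
def A3 (S : Type*) [Fintype S] [DecidableEq S] (i : Fin 3) : Set (GG → Finset S) :=
  (fun ω => (ω 1, ω (s i))) ⁻¹' {q : Finset S × Finset S | (q.1 ∩ q.2).Nonempty}

/-- Sure event for `ν`: every element of the root label occurs in a neighbour's label. -/
def AS (S : Type*) [Fintype S] [DecidableEq S] : Set (GG → Finset S) :=
  (fun η => (η 1, η (s 0), η (s 1), η (s 2))) ⁻¹'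
    {q : Finset S × Finset S × Finset S × Finset S |
      ∀ v ∈ q.1, v ∈ q.2.1 ∨ v ∈ q.2.2.1 ∨ v ∈ q.2.2.2}

lemma measA1 : MeasurableSet (A1 S) :=
  (measurable_pi_apply _) MeasurableSet.of_discrete

lemma measA2 : MeasurableSet (A2 S) :=
  MeasurableSet.iUnion fun i =>
    ((measurable_pi_apply _).prodMk (measurable_pi_apply _)) MeasurableSet.of_discrete

lemma measA3 (i : Fin 3) : MeasurableSet (A3 S i) :=
  ((measurable_pi_apply _).prodMk (measurable_pi_apply _)) MeasurableSet.of_discrete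

lemma measAS : MeasurableSet (AS S) :=
  ((measurable_pi_apply _).prodMk ((measurable_pi_apply _).prodMk
    ((measurable_pi_apply _).prodMk (measurable_pi_apply _)))) MeasurableSet.of_discrete

lemma mu_A1 (e : AA ↪ S) : muM e (A1 S) ≤ (1050 : ℝ≥0∞)⁻¹ := by
  rw [muM, Measure.map_apply (measurable_Fom2 e) measA1]
  refine le_trans (measure_mono ?_) (le_of_eq (collision_bound (ι := GG × Bool)
    (z := ((1 : GG), false)) (z' := ((1 : GG), true)) (by simp)))
  intro v hv
  simp only [A1, Set.mem_preimage, Set.mem_setOf_eq, Fom2] at hv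
  simp only [Set.mem_setOf_eq]
  by_contra hne
  exact hv (Finset.card_pair (fun h => hne (e.injective h)))

lemma mu_A3 (e : AA ↪ S) (i : Fin 3) : muM e (A3 S i) ≤ 4 * (1050 : ℝ≥0∞)⁻¹ := by
  rw [muM, Measure.map_apply (measurable_Fom2 e) (measA3 i)]
  have hone : (1 : GG) ≠ s i := fun h => s_ne_one i h.symm
  set L : List ((GG × Bool) × (GG × Bool)) :=
    [((1, false), (s i, false)), ((1, false), (s i, true)),
     ((1, true), (s i, false)), ((1, true), (s i, true))] with hL
  refine le_trans (measure_mono ?_) (le_trans (PiU_bad_le L) (by rw [hL]; norm_num))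
  intro v hv
  simp only [A3, Set.mem_preimage, Set.mem_setOf_eq, Fom2] at hv
  obtain ⟨a, ha⟩ := hv
  rw [Finset.mem_inter] at ha
  obtain ⟨ha1, ha2⟩ := ha
  have h1 : ∃ b1 : Bool, a = e (v (1, b1)) := by
    rcases Finset.mem_insert.1 ha1 with h | h
    · exact ⟨false, h⟩
    · exact ⟨true, Finset.mem_singleton.1 h⟩
  have h2 : ∃ b2 : Bool, a = e (v (s i, b2)) := by
    rcases Finset.mem_insert.1 ha2 with h | h
    · exact ⟨false, h⟩
    · exact ⟨true, Finset.mem_singleton.1 h⟩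
  obtain ⟨b1, hb1⟩ := h1
  obtain ⟨b2, hb2⟩ := h2
  refine ⟨((1, b1), (s i, b2)), ?_, ?_, e.injective (hb1 ▸ hb2)⟩
  · rcases b1 <;> rcases b2 <;> simp [hL]
  · simp only [ne_eq, Prod.mk.injEq, not_and]
    intro h
    exact absurd h hone

lemma nu_A2 (e : AA ↪ S) : nuM e (A2 S) ≤ 81 * (1050 : ℝ≥0∞)⁻¹ := by
  rw [nuM, Measure.map_apply (measurable_Feta e) measA2]
  set L : List (GG × GG) := ZL ×ˢ ZL with hL
  have hlen : (L.length : ℝ≥0∞) = 81 := by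
    rw [hL, List.length_product]
    norm_num [ZL]
  refine le_trans (measure_mono ?_) (le_trans (PiU_bad_le L) (by rw [hlen]))
  intro u hu
  simp only [A2, Set.mem_iUnion, Set.mem_preimage, Set.mem_setOf_eq] at hu
  obtain ⟨i, hcard⟩ := hu
  have hcard' : 1 < (Feta e u 1 ∩ Feta e u (s i)).card := by omega
  obtain ⟨v, hv, w, hw, hvw⟩ := Finset.one_lt_card.1 hcard'
  obtain ⟨hv1, hv2⟩ := Finset.mem_inter.1 hv
  obtain ⟨hw1, hw2⟩ := Finset.mem_inter.1 hw
  obtain ⟨jv, hjv⟩ := mem_Feta_one hv1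
  obtain ⟨kv, hkv⟩ := mem_Feta hv2
  obtain ⟨jw, hjw⟩ := mem_Feta_one hw1
  obtain ⟨kw, hkw⟩ := mem_Feta hw2
  have huv : u (s jv) = u (ch (s i) kv) := e.injective (hjv ▸ hkv)
  have huw : u (s jw) = u (ch (s i) kw) := e.injective (hjw ▸ hkw)
  have hjj : jv ≠ jw := by
    intro h
    exact hvw (by rw [hjv, hjw, h])
  by_cases h1 : s jv = ch (s i) kv
  · have hiv : jv = i := ch_s_trivial h1
    have h2 : s jw ≠ ch (s i) kw := by
      intro hEq
      exact hjj (by rw [hiv, ch_s_trivial hEq])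
    exact ⟨(s jw, ch (s i) kw),
      List.pair_mem_product.2 ⟨s_mem_ZL jw, ch_s_mem_ZL i kw⟩, h2, huw⟩
  · exact ⟨(s jv, ch (s i) kv),
      List.pair_mem_product.2 ⟨s_mem_ZL jv, ch_s_mem_ZL i kv⟩, h1, huv⟩

lemma nu_AS (e : AA ↪ S) : nuM e (AS S) = 1 := by
  rw [nuM, Measure.map_apply (measurable_Feta e) measAS]
  have : (Feta e) ⁻¹' (AS S) = Set.univ := by
    ext u
    simp only [AS, Set.mem_preimage, Set.mem_setOf_eq, Set.mem_univ, iff_true]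
    intro v hv
    obtain ⟨j, hj⟩ := mem_Feta_one hv
    have hmem : v ∈ Feta e u (s j) := by
      have h2 := mem_three (fun k => e (u (ch (s j) k))) j
      rw [ch_s_self] at h2
      rw [hj]
      exact h2
    fin_cases j
    · exact Or.inl hmem
    · exact Or.inr (Or.inl hmem)
    · exact Or.inr (Or.inr hmem)
  rw [this]
  exact measure_univ

end Events

/-! ### No invariant monotone coupling -/

section Final

variable {S : Type*} [Fintype S] [DecidableEq S] [MeasurableSpace (Finset S)]
  [MeasurableSingletonClass (Finset S)]

lemma fin3_ne_cases : ∀ a b : Fin 3, a ≠ b →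
    (a = 0 ∧ b = 1) ∨ (a = 1 ∧ b = 0) ∨ (a = 0 ∧ b = 2) ∨ (a = 2 ∧ b = 0) ∨
    (a = 1 ∧ b = 2) ∨ (a = 2 ∧ b = 1) := by decide

set_option maxHeartbeats 1000000 in
lemma no_invariant (e : AA ↪ S) (π : Measure ((GG → Finset S) × (GG → Finset S)))
    (hp : IsProbabilityMeasure π) (hcpl : IsCoupling π (muM e) (nuM e))
    (hmono : IsMonotoneCoupling π) (hinv : IsInvariantPairMeasure π) : False := by
  classical
  obtain ⟨hfst, hsnd⟩ := hcpl
  set ε : ℝ≥0∞ := (1050 : ℝ≥0∞)⁻¹ with hε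
  -- the ownership events
  set E : Fin 3 → Set ((GG → Finset S) × (GG → Finset S)) := fun i =>
    (fun p => (p.1 1, p.2 (s i))) ⁻¹' {q : Finset S × Finset S | (q.1 ∩ q.2).Nonempty} with hE
  set E' : Fin 3 → Set ((GG → Finset S) × (GG → Finset S)) := fun i =>
    (fun p => (p.1 (s i), p.2 1)) ⁻¹' {q : Finset S × Finset S | (q.1 ∩ q.2).Nonempty} with hE'
  have measE : ∀ i, MeasurableSet (E i) := fun i =>
    (((measurable_pi_apply _).comp measurable_fst).prodMk
      ((measurable_pi_apply _).comp measurable_snd)) MeasurableSet.of_discrete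
  have measE' : ∀ i, MeasurableSet (E' i) := fun i =>
    (((measurable_pi_apply _).comp measurable_fst).prodMk
      ((measurable_pi_apply _).comp measurable_snd)) MeasurableSet.of_discrete
  -- the monotone event
  set GM : Set ((GG → Finset S) × (GG → Finset S)) := {p | ∀ x : GG, p.1 x ≤ p.2 x} with hGMdef
  have measGM : MeasurableSet GM := monoSet_measurable
  have hGMc : π GMᶜ = 0 := by
    have h := measure_compl measGM (measure_ne_top π GM)
    rw [h, hmono, measure_univ, tsub_self]
  -- invariance: π (E' i) = π (E i)
  have hEE' : ∀ i, π (E' i) = π (E i) := by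
    intro i
    have hT : Measurable (fun p : (GG → Finset S) × (GG → Finset S) =>
        (configTranslate (s i) p.1, configTranslate (s i) p.2)) :=
      ((measurable_configTranslate _).comp measurable_fst).prodMk
        ((measurable_configTranslate _).comp measurable_snd)
    have h := hinv (s i)
    have h2 : π (E i) = π ((fun p : (GG → Finset S) × (GG → Finset S) =>
        (configTranslate (s i) p.1, configTranslate (s i) p.2)) ⁻¹' (E i)) := by
      conv_lhs => rw [← h]
      exact Measure.map_apply hT (measE i)
    rw [h2]
    congr 1
    ext p
    simp only [hE, hE', Set.mem_preimage, Set.mem_setOf_eq, configTranslate]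
    rw [s_inv, mul_one, s_mul_s]
  -- marginal transfers
  have hμA : ∀ A : Set (GG → Finset S), MeasurableSet A → π (Prod.fst ⁻¹' A) = muM e A := by
    intro A hA
    rw [← hfst, Measure.map_apply measurable_fst hA]
  have hνA : ∀ A : Set (GG → Finset S), MeasurableSet A → π (Prod.snd ⁻¹' A) = nuM e A := by
    intro A hA
    rw [← hsnd, Measure.map_apply measurable_snd hA]
  have hB1 : π (Prod.fst ⁻¹' (A1 S)) ≤ ε := by rw [hμA _ measA1]; exact mu_A1 e
  have hB2 : π (Prod.snd ⁻¹' (A2 S)) ≤ 81 * ε := by rw [hνA _ measA2]; exact nu_A2 e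
  have hB3 : ∀ i, π (Prod.fst ⁻¹' (A3 S i)) ≤ 4 * ε := by
    intro i; rw [hμA _ (measA3 i)]; exact mu_A3 e i
  have hGSc : π (Prod.snd ⁻¹' (AS S)ᶜ) = 0 := by
    have h1 : nuM e (AS S)ᶜ = 0 := by
      have h := measure_compl measAS (measure_ne_top (nuM e) (AS S))
      rw [h, nu_AS e, measure_univ, tsub_self]
    rw [← h1]
    exact hνA _ measAS.compl
  -- per-edge bound
  have hinter : ∀ i, π (E i ∩ E' i) ≤ 85 * ε := by
    intro i
    have hsub : E i ∩ E' i ⊆ GMᶜ ∪ (Prod.fst ⁻¹' (A3 S i) ∪ Prod.snd ⁻¹' (A2 S)) := by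
      rintro p ⟨hpe, hpe'⟩
      by_cases hgm : p ∈ GM
      · right
        simp only [hE, Set.mem_preimage, Set.mem_setOf_eq] at hpe
        simp only [hE', Set.mem_preimage, Set.mem_setOf_eq] at hpe'
        obtain ⟨v, hv⟩ := hpe
        obtain ⟨w, hw⟩ := hpe'
        rw [Finset.mem_inter] at hv hw
        by_cases hvw : v = w
        · left
          subst hvw
          exact ⟨v, Finset.mem_inter.2 ⟨hv.1, hw.1⟩⟩
        · right
          simp only [A2, Set.mem_preimage, Set.mem_iUnion, Set.mem_setOf_eq]
          refine ⟨i, ?_⟩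
          apply Finset.one_lt_card.2
          refine ⟨v, ?_, w, ?_, hvw⟩
          · exact Finset.mem_inter.2 ⟨(hgm 1) hv.1, hv.2⟩
          · exact Finset.mem_inter.2 ⟨hw.2, (hgm (s i)) hw.1⟩
      · left; exact hgm
    calc π (E i ∩ E' i) ≤ π (GMᶜ ∪ (Prod.fst ⁻¹' (A3 S i) ∪ Prod.snd ⁻¹' (A2 S))) :=
          measure_mono hsub
      _ ≤ π GMᶜ + π (Prod.fst ⁻¹' (A3 S i) ∪ Prod.snd ⁻¹' (A2 S)) := measure_union_le _ _
      _ ≤ π GMᶜ + (π (Prod.fst ⁻¹' (A3 S i)) + π (Prod.snd ⁻¹' (A2 S))) :=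
          add_le_add le_rfl (measure_union_le _ _)
      _ ≤ 0 + (4 * ε + 81 * ε) := by
          refine add_le_add (le_of_eq hGMc) (add_le_add (hB3 i) hB2)
      _ = 85 * ε := by
          rw [zero_add, ← add_mul]
          norm_num
  -- the "two owners" event
  set M2 : Set ((GG → Finset S) × (GG → Finset S)) :=
    (E 0 ∩ E 1) ∪ ((E 0 ∪ E 1) ∩ E 2) with hM2
  have measM2 : MeasurableSet M2 :=
    (((measE 0).inter (measE 1)).union (((measE 0).union (measE 1)).inter (measE 2)))
  -- lower bound on M2
  have hM2c : π M2ᶜ ≤ 82 * ε := by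
    have hsub : M2ᶜ ⊆ GMᶜ ∪ (Prod.snd ⁻¹' (AS S)ᶜ ∪ (Prod.fst ⁻¹' (A1 S) ∪ Prod.snd ⁻¹' (A2 S))) := by
      intro p hp
      by_cases hgm : p ∈ GM
      on_goal 2 => left; exact hgm
      by_cases hAS : p ∈ Prod.snd ⁻¹' (AS S)
      on_goal 2 => right; left; exact hAS
      by_cases hA1 : p ∈ Prod.fst ⁻¹' (A1 S)
      on_goal 1 => right; right; left; exact hA1
      by_cases hA2 : p ∈ Prod.snd ⁻¹' (A2 S)
      on_goal 1 => right; right; right; exact hA2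
      exfalso
      apply hp
      -- now derive p ∈ M2
      simp only [A1, Set.mem_preimage, Set.mem_setOf_eq, not_not] at hA1
      obtain ⟨v, w, hvw, hpair⟩ := Finset.card_eq_two.1 hA1
      have hv1 : v ∈ p.1 1 := by rw [hpair]; simp
      have hw1 : w ∈ p.1 1 := by rw [hpair]; simp
      have hv2 : v ∈ p.2 1 := (hgm 1) hv1
      have hw2 : w ∈ p.2 1 := (hgm 1) hw1
      simp only [AS, Set.mem_preimage, Set.mem_setOf_eq] at hAS
      have hvnb : ∃ j : Fin 3, v ∈ p.2 (s j) := by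
        rcases hAS v hv2 with h | h | h
        exacts [⟨0, h⟩, ⟨1, h⟩, ⟨2, h⟩]
      have hwnb : ∃ j : Fin 3, w ∈ p.2 (s j) := by
        rcases hAS w hw2 with h | h | h
        exacts [⟨0, h⟩, ⟨1, h⟩, ⟨2, h⟩]
      obtain ⟨iv, hiv⟩ := hvnb
      obtain ⟨iw, hiw⟩ := hwnb
      have hij : iv ≠ iw := by
        intro hEq
        apply hA2
        simp only [A2, Set.mem_preimage, Set.mem_iUnion, Set.mem_setOf_eq]
        refine ⟨iv, ?_⟩
        apply Finset.one_lt_card.2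
        exact ⟨v, Finset.mem_inter.2 ⟨hv2, hiv⟩, w,
          Finset.mem_inter.2 ⟨hw2, hEq ▸ hiw⟩, hvw⟩
      have hEiv : p ∈ E iv := by
        simp only [hE, Set.mem_preimage, Set.mem_setOf_eq]
        exact ⟨v, Finset.mem_inter.2 ⟨hv1, hiv⟩⟩
      have hEiw : p ∈ E iw := by
        simp only [hE, Set.mem_preimage, Set.mem_setOf_eq]
        exact ⟨w, Finset.mem_inter.2 ⟨hw1, hiw⟩⟩
      -- conclude membership in M2
      show p ∈ (E 0 ∩ E 1) ∪ ((E 0 ∪ E 1) ∩ E 2)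
      rcases fin3_ne_cases iv iw hij with ⟨h1, h2⟩ | ⟨h1, h2⟩ | ⟨h1, h2⟩ | ⟨h1, h2⟩ |
          ⟨h1, h2⟩ | ⟨h1, h2⟩ <;> rw [h1] at hEiv <;> rw [h2] at hEiw
      · exact Or.inl ⟨hEiv, hEiw⟩
      · exact Or.inl ⟨hEiw, hEiv⟩
      · exact Or.inr ⟨Or.inl hEiv, hEiw⟩
      · exact Or.inr ⟨Or.inl hEiw, hEiv⟩
      · exact Or.inr ⟨Or.inr hEiv, hEiw⟩
      · exact Or.inr ⟨Or.inr hEiw, hEiv⟩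
    calc π M2ᶜ ≤ π (GMᶜ ∪ (Prod.snd ⁻¹' (AS S)ᶜ ∪ (Prod.fst ⁻¹' (A1 S) ∪ Prod.snd ⁻¹' (A2 S)))) :=
          measure_mono hsub
      _ ≤ π GMᶜ + (π (Prod.snd ⁻¹' (AS S)ᶜ) + (π (Prod.fst ⁻¹' (A1 S)) + π (Prod.snd ⁻¹' (A2 S)))) := by
          refine (measure_union_le _ _).trans (add_le_add le_rfl ?_)
          refine (measure_union_le _ _).trans (add_le_add le_rfl ?_)
          exact measure_union_le _ _
      _ ≤ 0 + (0 + (ε + 81 * ε)) := by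
          exact add_le_add (le_of_eq hGMc) (add_le_add (le_of_eq hGSc) (add_le_add hB1 hB2))
      _ = 82 * ε := by
          rw [zero_add, zero_add]
          nth_rewrite 1 [← one_mul ε]
          rw [← add_mul]
          norm_num
  -- key counting identity
  have hsum : 2 * π M2 ≤ π (E 0) + π (E 1) + π (E 2) := by
    have h01 := measure_union_add_inter (μ := π) (E 0) (measE 1)
    have h2 := measure_union_add_inter (μ := π) (E 0 ∪ E 1) (measE 2)
    have hM2a : π M2 ≤ π (E 0 ∪ E 1 ∪ E 2) := by
      apply measure_mono
      rw [hM2]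
      rintro p (⟨h , _⟩ | ⟨h, h'⟩)
      · exact Or.inl (Or.inl h)
      · exact Or.inr h'
    have hM2b : π M2 ≤ π (E 0 ∩ E 1) + π ((E 0 ∪ E 1) ∩ E 2) := by
      refine le_trans (measure_mono ?_) (measure_union_le _ _)
      rw [hM2]
    calc 2 * π M2 = π M2 + π M2 := two_mul _
      _ ≤ π (E 0 ∪ E 1 ∪ E 2) + (π (E 0 ∩ E 1) + π ((E 0 ∪ E 1) ∩ E 2)) := add_le_add hM2a hM2b
      _ = (π (E 0 ∪ E 1 ∪ E 2) + π ((E 0 ∪ E 1) ∩ E 2)) + π (E 0 ∩ E 1) := by ring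
      _ = (π (E 0 ∪ E 1) + π (E 2)) + π (E 0 ∩ E 1) := by rw [h2]
      _ = (π (E 0 ∪ E 1) + π (E 0 ∩ E 1)) + π (E 2) := by ring
      _ = (π (E 0) + π (E 1)) + π (E 2) := by rw [h01]
  -- per-edge upper bound
  have hEdge : ∀ i, π (E i) + π (E i) ≤ 1 + 85 * ε := by
    intro i
    have h := measure_union_add_inter (μ := π) (E i) (measE' i)
    calc π (E i) + π (E i) = π (E i) + π (E' i) := by rw [hEE' i]
      _ = π (E i ∪ E' i) + π (E i ∩ E' i) := h.symm
      _ ≤ 1 + 85 * ε := add_le_add prob_le_one (hinter i)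
  -- combine everything
  have hfin : (4 : ℝ≥0∞) ≤ 3 + 583 * ε := by
    have h1 : (1 : ℝ≥0∞) = π M2 + π M2ᶜ := by
      rw [measure_add_measure_compl measM2, measure_univ]
    calc (4 : ℝ≥0∞) = 4 * 1 := by norm_num
      _ = 4 * π M2 + 4 * π M2ᶜ := by rw [h1]; ring
      _ ≤ 2 * (2 * π M2) + 4 * (82 * ε) := by
          refine add_le_add (le_of_eq (by ring)) (mul_le_mul_right hM2c 4)
      _ ≤ 2 * (π (E 0) + π (E 1) + π (E 2)) + 328 * ε := by
          refine add_le_add (mul_le_mul_right hsum 2) (le_of_eq (by ring))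
      _ = ((π (E 0) + π (E 0)) + (π (E 1) + π (E 1)) + (π (E 2) + π (E 2))) + 328 * ε := by
          ring
      _ ≤ ((1 + 85 * ε) + (1 + 85 * ε) + (1 + 85 * ε)) + 328 * ε := by
          refine add_le_add (add_le_add (add_le_add (hEdge 0) (hEdge 1)) (hEdge 2)) le_rfl
      _ = 3 + 583 * ε := by ring
  -- numeric contradiction
  have h1le : (1 : ℝ≥0∞) ≤ 583 * ε := by
    have := hfin
    rw [show (4 : ℝ≥0∞) = 3 + 1 by norm_num] at this
    exact (ENNReal.add_le_add_iff_left (by norm_num)).1 this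
  have h2 : (1050 : ℝ≥0∞) * 1 ≤ 1050 * (583 * ε) := mul_le_mul_right h1le 1050
  rw [mul_one] at h2
  have h3 : (1050 : ℝ≥0∞) * (583 * ε) = 583 := by
    rw [hε, mul_comm (583 : ℝ≥0∞), ← mul_assoc, ENNReal.mul_inv_cancel (by norm_num) (by norm_num),
      one_mul]
  rw [h3] at h2
  exact absurd h2 (by norm_num)

end Final

end NIMC

/-- Let `S` be a finite set with `|S| = n ≥ 1050` and let `G = ℤ/2 * ℤ/2 * ℤ/2` be the free
product of three copies of `ℤ/2`. Then there are two `G`-invariant probability measures `μ`,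
`ν` on the configuration space `(Finset S)^G` (labels ordered by inclusion) that admit a
monotone coupling, but no monotone coupling of them is invariant under the diagonal
left-translation action of `G`. -/
theorem no_invariant_monotone_coupling_finset_labels
    (S : Type*) [Fintype S] (hS : 1050 ≤ Fintype.card S)
    [MeasurableSpace (Finset S)] [MeasurableSingletonClass (Finset S)] :
    ∃ μ ν : Measure ((Monoid.CoprodI fun _ : Fin 3 => Multiplicative (ZMod 2)) → Finset S),
      IsProbabilityMeasure μ ∧ IsProbabilityMeasure ν ∧
      IsInvariantConfigMeasure μ ∧ IsInvariantConfigMeasure ν ∧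
      (∃ π, IsProbabilityMeasure π ∧ IsCoupling π μ ν ∧ IsMonotoneCoupling π) ∧
      ∀ π, IsProbabilityMeasure π → IsCoupling π μ ν → IsMonotoneCoupling π →
        ¬ IsInvariantPairMeasure π := by
  
  letI : DecidableEq S := Classical.decEq S
  have hemb : Nonempty (NIMC.AA ↪ S) := by
    rw [Function.Embedding.nonempty_iff_card_le, NIMC.card_AA]
    exact hS
  obtain ⟨e⟩ := hemb
  exact ⟨NIMC.muM e, NIMC.nuM e, inferInstance, inferInstance,
    NIMC.muM_invariant e, NIMC.nuM_invariant e,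
    ⟨NIMC.piM e, inferInstance, NIMC.piM_coupling e, NIMC.piM_monotone e⟩,
    fun π hp hc hm hi => NIMC.no_invariant e π hp hc hm hi⟩
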